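/- Let R be the group presentation with generators a, b, c, d, e and relations (R1)–(R8) as defined (Borisov-type presentation with encoded letters μ(s_1), μ(s_2), μ(k), μ(t) as specific words in a, b). Adding the two relations a = 1 and c = 1 to R yields a presentation of the trivial group. -/

import Mathlib

namespace Stmt10

/-- The free group on the five generators `a, b, c, d, e`. -/
abbrev F5 := FreeGroup (Fin 5)

def a : F5 := FreeGroup.of 0
def b : F5 := FreeGroup.of 1
def c : F5 := FreeGroup.of 2
def d : F5 := FreeGroup.of 3
def e : F5 := FreeGroup.of 4

/-- The encoded letters: `μw i` is the word
`a^{10i}b^{10i}a^{-(10i+1)}b^{-(10i+1)}a^{-(10i+2)}b^{-(10i+2)}a^{10i+3}b^{10i+3}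
a^{10i+4}b^{10i+4}a^{-(10i+5)}b^{-(10i+5)}a^{-(10i+6)}b^{-(10i+6)}a^{10i+8}b^{10i+8}`
in `a, b`; `μ(s₁) = μw 1`, `μ(s₂) = μw 2`, `μ(k) = μw 3`, `μ(t) = μw 4`. -/
def μw (i : ℕ) : F5 :=
  a ^ (10 * (i : ℤ)) * b ^ (10 * (i : ℤ)) *
  a ^ (-(10 * (i : ℤ) + 1)) * b ^ (-(10 * (i : ℤ) + 1)) *
  a ^ (-(10 * (i : ℤ) + 2)) * b ^ (-(10 * (i : ℤ) + 2)) *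
  a ^ (10 * (i : ℤ) + 3) * b ^ (10 * (i : ℤ) + 3) *
  a ^ (10 * (i : ℤ) + 4) * b ^ (10 * (i : ℤ) + 4) *
  a ^ (-(10 * (i : ℤ) + 5)) * b ^ (-(10 * (i : ℤ) + 5)) *
  a ^ (-(10 * (i : ℤ) + 6)) * b ^ (-(10 * (i : ℤ) + 6)) *
  a ^ (10 * (i : ℤ) + 8) * b ^ (10 * (i : ℤ) + 8)

/-- `μ(s₁)` and `μ(s₂)`. -/
def μs (j : Fin 2) : F5 := μw ((j : ℕ) + 1)

def μk : F5 := μw 3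
def μt : F5 := μw 4

/-- The encoding of a positive word in `s₁, s₂`. -/
def μword (l : List (Fin 2)) : F5 := (l.map μs).prod

/-- The relators (R1)–(R8) of the presentation `R`.  Here `F₁ = s₁s₁s₂s₁s₂`,
`E₁ = s₂s₁s₁`, `F₂ = s₁s₁s₂s₂`, `E₂ = s₂s₂s₁`, while `F₃`, `E₃` and `P` are the
remaining (fixed) words of Matiyasevich's Thue system, and `α > 5`. -/
def rels (α : ℕ) (F₃ E₃ P : List (Fin 2)) : Set F5 :=
  (Set.range fun j : Fin 2 => d ^ (α : ℤ) * μs j * (μs j * d)⁻¹) ∪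
  (Set.range fun j : Fin 2 => e * μs j * (μs j * e ^ (α : ℤ))⁻¹) ∪
  ({ d * μword [0, 0, 1, 0, 1] * e * c * (c * d ^ (2 : ℤ) * μword [1, 0, 0] * e)⁻¹,
     d ^ (3 : ℤ) * μword [0, 0, 1, 1] * e ^ (3 : ℤ) * c *
       (c * d ^ (3 : ℤ) * μword [1, 1, 0] * e ^ (3 : ℤ))⁻¹,
     d ^ (4 : ℤ) * μword F₃ * e ^ (4 : ℤ) * c *
       (c * d ^ (4 : ℤ) * μword E₃ * e ^ (5 : ℤ))⁻¹,
     d * μt * (μt * d)⁻¹,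
     e * μk * (μk * e)⁻¹,
     (μword P)⁻¹ * μt * μword P * μk * (μk * (μword P)⁻¹ * μt * μword P)⁻¹,
     a * c * (c * a)⁻¹,
     b * c * (c * b)⁻¹ } : Set F5)

/-- Adding the relations `a = 1` and `c = 1` to the presentation `R` yields the
trivial group. -/
theorem trivialize_R (α : ℕ) (hα : 5 < α) (F₃ E₃ P : List (Fin 2)) :
    Subsingleton (PresentedGroup (rels α F₃ E₃ P ∪ {a, c})) := by
  classical
  set S : Set F5 := rels α F₃ E₃ P ∪ {a, c} with hS
  let π : F5 →* PresentedGroup S := QuotientGroup.mk' (Subgroup.normalClosure S)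
  have hone : ∀ r ∈ S, π r = 1 := by
    intro r hr
    exact (QuotientGroup.eq_one_iff r).mpr (Subgroup.subset_normalClosure hr)
  have ha : π a = 1 := hone a (Or.inr (by simp))
  have hc : π c = 1 := hone c (Or.inr (by simp))
  have hμ : ∀ i : ℕ, π (μw i) = π b := by
    intro i
    simp only [μw, map_mul, map_zpow, ha, one_zpow, one_mul, mul_one]
    group
  have hμs : ∀ j : Fin 2, π (μs j) = π b := fun j => hμ _
  have hμword : ∀ l : List (Fin 2), π (μword l) = (π b) ^ l.length := by
    intro l
    induction l with
    | nil => simp [μword]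
    | cons x xs ih =>
      simp only [μword, List.map_cons, List.prod_cons, map_mul, hμs, List.length_cons,
        pow_succ]
      rw [← μword, ih]
      group
  -- relator R3.2 gives b = 1
  have h32 : π (d ^ (3 : ℤ) * μword [0, 0, 1, 1] * e ^ (3 : ℤ) * c *
      (c * d ^ (3 : ℤ) * μword [1, 1, 0] * e ^ (3 : ℤ))⁻¹) = 1 := by
    apply hone
    exact Or.inl (Or.inr (by simp))
  have hb : π b = 1 := by
    rw [map_mul, map_inv, mul_inv_eq_one] at h32
    simp only [map_mul, map_zpow, hμword, hc, one_mul, mul_one,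
      List.length_cons, List.length_nil] at h32
    -- h32 : πd^3 * πb^4 * πe^3 = πd^3 * πb^3 * πe^3
    have h4 := mul_left_cancel (mul_right_cancel h32)
    calc π b = π b ^ 4 * (π b ^ 3)⁻¹ := by group
    _ = 1 := by rw [h4]; group
  -- relator R3.1 gives d = 1
  have h31 : π (d * μword [0, 0, 1, 0, 1] * e * c *
      (c * d ^ (2 : ℤ) * μword [1, 0, 0] * e)⁻¹) = 1 := by
    apply hone
    exact Or.inl (Or.inr (by simp))
  have hd : π d = 1 := by
    rw [map_mul, map_inv, mul_inv_eq_one] at h31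
    simp only [map_mul, map_zpow, hμword, hb, hc, one_pow, one_mul, mul_one] at h31
    have h2 := mul_right_cancel h31
    calc π d = (π d ^ (2 : ℤ)) * (π d)⁻¹ := by group
    _ = 1 := by rw [← h2]; group
  -- relator R3.3 gives e = 1
  have h33 : π (d ^ (4 : ℤ) * μword F₃ * e ^ (4 : ℤ) * c *
      (c * d ^ (4 : ℤ) * μword E₃ * e ^ (5 : ℤ))⁻¹) = 1 := by
    apply hone
    exact Or.inl (Or.inr (by simp))
  have he : π e = 1 := by
    rw [map_mul, map_inv, mul_inv_eq_one] at h33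
    simp only [map_mul, map_zpow, hμword, hb, hc, hd, one_pow, one_zpow, one_mul,
      mul_one] at h33
    -- h33 : πe^4 = πe^5
    calc π e = π e ^ (5 : ℤ) * (π e ^ (4 : ℤ))⁻¹ := by group
    _ = 1 := by rw [← h33]; group
  have hgen : ∀ i : Fin 5, π (FreeGroup.of i) = 1 := by
    intro i
    fin_cases i
    · exact ha
    · exact hb
    · exact hc
    · exact hd
    · exact he
  have hall : ∀ x : F5, π x = 1 := by
    intro x
    induction x using FreeGroup.induction_on with
    | C1 => exact map_one π
    | of i => exact hgen i
    | inv_of i h => rw [map_inv, h, inv_one]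
    | mul x y hx hy => rw [map_mul, hx, hy, one_mul]
  constructor
  intro g h
  obtain ⟨x, rfl⟩ := QuotientGroup.mk'_surjective (Subgroup.normalClosure S) g
  obtain ⟨y, rfl⟩ := QuotientGroup.mk'_surjective (Subgroup.normalClosure S) h
  rw [show QuotientGroup.mk' (Subgroup.normalClosure S) x = π x from rfl, hall x,
    show QuotientGroup.mk' (Subgroup.normalClosure S) y = π y from rfl, hall y]

end Stmt10
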